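/- Let v : [0,1]×[0,1] → ℝ be twice continuously differentiable on the closed square [0,1]×[0,1], satisfy the wave equation ∂_t² v(t,x) = ∂_x² v(t,x) on [0,1]×[0,1], and have initial data v(0,x) = v₀(x) and ∂_t v(0,x) = v₁(x) for x ∈ [0,1], where v₀ is continuously differentiable. Then for every t ∈ [0,1] the interface equation ∂_t v(t,0) + ∂_x v(t,0) = v₀′(t) + v₁(t) holds. -/

import Mathlib

open Set Real MeasureTheory intervalIntegral

/-- A classical solution of the wave equation `∂_t² v = ∂_x² v` on `[0,T] × [0,1]`:
`v` is twice continuously differentiable up to the boundary, with first partial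
derivatives `vt`, `vx`, second partial derivatives `vtt`, `vxx` and mixed partial
derivative `vtx`, all continuous on the closed rectangle. -/
structure IsWaveSol (T : ℝ) (v vt vx vtt vtx vxx : ℝ → ℝ → ℝ) : Prop where
  contv : ContinuousOn (fun p : ℝ × ℝ => v p.1 p.2) (Icc 0 T ×ˢ Icc 0 1)
  hvt : ∀ t ∈ Icc (0:ℝ) T, ∀ x ∈ Icc (0:ℝ) 1, HasDerivAt (fun τ => v τ x) (vt t x) t
  hvx : ∀ t ∈ Icc (0:ℝ) T, ∀ x ∈ Icc (0:ℝ) 1, HasDerivAt (fun y => v t y) (vx t x) x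
  hvtt : ∀ t ∈ Icc (0:ℝ) T, ∀ x ∈ Icc (0:ℝ) 1, HasDerivAt (fun τ => vt τ x) (vtt t x) t
  hvtx : ∀ t ∈ Icc (0:ℝ) T, ∀ x ∈ Icc (0:ℝ) 1, HasDerivAt (fun y => vt t y) (vtx t x) x
  hvxt : ∀ t ∈ Icc (0:ℝ) T, ∀ x ∈ Icc (0:ℝ) 1, HasDerivAt (fun τ => vx τ x) (vtx t x) t
  hvxx : ∀ t ∈ Icc (0:ℝ) T, ∀ x ∈ Icc (0:ℝ) 1, HasDerivAt (fun y => vx t y) (vxx t x) x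
  contvt : ContinuousOn (fun p : ℝ × ℝ => vt p.1 p.2) (Icc 0 T ×ˢ Icc 0 1)
  contvx : ContinuousOn (fun p : ℝ × ℝ => vx p.1 p.2) (Icc 0 T ×ˢ Icc 0 1)
  contvtt : ContinuousOn (fun p : ℝ × ℝ => vtt p.1 p.2) (Icc 0 T ×ˢ Icc 0 1)
  contvtx : ContinuousOn (fun p : ℝ × ℝ => vtx p.1 p.2) (Icc 0 T ×ˢ Icc 0 1)
  contvxx : ContinuousOn (fun p : ℝ × ℝ => vxx p.1 p.2) (Icc 0 T ×ˢ Icc 0 1)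
  wave : ∀ t ∈ Icc (0:ℝ) T, ∀ x ∈ Icc (0:ℝ) 1, vtt t x = vxx t x

/-- Chain rule along the characteristic line `s ↦ (t - s, s)` for a function with
partial derivatives on the closed unit square, at an interior point. -/
lemma hasDerivAt_line (f ft fx : ℝ → ℝ → ℝ) {t s₀ : ℝ}
    (ht : t ∈ Ioc (0:ℝ) 1) (hs₀ : s₀ ∈ Ioo 0 t)
    (hft : ∀ τ ∈ Icc (0:ℝ) 1, ∀ x ∈ Icc (0:ℝ) 1, HasDerivAt (fun τ => f τ x) (ft τ x) τ)
    (hfx : ∀ τ ∈ Icc (0:ℝ) 1, ∀ x ∈ Icc (0:ℝ) 1, HasDerivAt (fun y => f τ y) (fx τ x) x)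
    (hcont : ContinuousOn (fun p : ℝ × ℝ => ft p.1 p.2) (Icc 0 1 ×ˢ Icc 0 1)) :
    HasDerivAt (fun s => f (t - s) s) (-ft (t - s₀) s₀ + fx (t - s₀) s₀) s₀ := by
  obtain ⟨ht0, ht1⟩ := ht
  obtain ⟨hs₀0, hs₀t⟩ := hs₀
  have hsub : ∀ s ∈ Ioo (0:ℝ) t, s ∈ Icc (0:ℝ) 1 ∧ t - s ∈ Icc (0:ℝ) 1 := by
    intro s hs
    exact ⟨⟨hs.1.le, by linarith [hs.2]⟩, ⟨by linarith [hs.2], by linarith [hs.1]⟩⟩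
  -- MVT in the first variable
  have key : ∀ s : ℝ, ∃ c : ℝ, |c - (t - s₀)| ≤ |s - s₀| ∧
      (s ∈ Ioo (0:ℝ) t → s ≠ s₀ → c ∈ Icc (0:ℝ) 1 ∧
        f (t - s) s - f (t - s₀) s = ft c s * (s₀ - s)) := by
    intro s
    by_cases hgood : s ∈ Ioo (0:ℝ) t ∧ s ≠ s₀
    · obtain ⟨hs, hne⟩ := hgood
      have hsI : s ∈ Icc (0:ℝ) 1 := (hsub s hs).1
      rcases lt_or_gt_of_ne hne with hlt | hgt
      · -- s < s₀, so t - s₀ < t - s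
        have hab : t - s₀ < t - s := by linarith
        have hIcc : Icc (t - s₀) (t - s) ⊆ Icc (0:ℝ) 1 := by
          intro τ hτ
          exact ⟨by linarith [hτ.1], by linarith [hτ.2, hs.1]⟩
        obtain ⟨c, hc, hceq⟩ := exists_hasDerivAt_eq_slope (fun τ => f τ s)
          (fun τ => ft τ s) hab
          (fun τ hτ => ((hft τ (hIcc hτ) s hsI)).continuousAt.continuousWithinAt)
          (fun τ hτ => hft τ (hIcc (Ioo_subset_Icc_self hτ)) s hsI)
        refine ⟨c, ?_, fun _ _ => ⟨hIcc (Ioo_subset_Icc_self hc), ?_⟩⟩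
        · rw [abs_of_neg (show s - s₀ < 0 by linarith), abs_le]
          constructor <;> linarith [hc.1, hc.2]
        · have hne' : t - s - (t - s₀) ≠ 0 := by intro h; apply hne; linarith
          rw [eq_div_iff hne'] at hceq
          linear_combination -hceq
      · -- s₀ < s, so t - s < t - s₀
        have hab : t - s < t - s₀ := by linarith
        have hIcc : Icc (t - s) (t - s₀) ⊆ Icc (0:ℝ) 1 := by
          intro τ hτ
          exact ⟨by linarith [hτ.1, hs.2], by linarith [hτ.2, hs₀0]⟩
        obtain ⟨c, hc, hceq⟩ := exists_hasDerivAt_eq_slope (fun τ => f τ s)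
          (fun τ => ft τ s) hab
          (fun τ hτ => ((hft τ (hIcc hτ) s hsI)).continuousAt.continuousWithinAt)
          (fun τ hτ => hft τ (hIcc (Ioo_subset_Icc_self hτ)) s hsI)
        refine ⟨c, ?_, fun _ _ => ⟨hIcc (Ioo_subset_Icc_self hc), ?_⟩⟩
        · rw [abs_of_pos (show (0:ℝ) < s - s₀ by linarith), abs_le]
          constructor <;> linarith [hc.1, hc.2]
        · have hne' : t - s₀ - (t - s) ≠ 0 := by intro h; apply hne; linarith
          rw [eq_div_iff hne'] at hceq
          linear_combination hceq
    · exact ⟨t - s₀, by simp [abs_nonneg], fun h1 h2 => absurd ⟨h1, h2⟩ hgood⟩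
  choose c hc1 hc2 using key
  -- `c s → t - s₀`
  have hctend : Filter.Tendsto c (nhds s₀) (nhds (t - s₀)) := by
    have h0 : Filter.Tendsto (fun s => c s - (t - s₀)) (nhds s₀) (nhds 0) := by
      apply squeeze_zero_norm (fun s => by simpa using hc1 s)
      have : ContinuousAt (fun s => |s - s₀|) s₀ := by fun_prop
      simpa using this.tendsto
    have := h0.add_const (t - s₀)
    simpa using this
  have hpmem : (t - s₀, s₀) ∈ Icc (0:ℝ) 1 ×ˢ Icc (0:ℝ) 1 := by
    constructor <;> constructor <;> simp <;> linarith
  have hca : ContinuousAt (fun p : ℝ × ℝ => ft p.1 p.2) (t - s₀, s₀) := by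
    apply hcont.continuousAt
    exact prod_mem_nhds (Icc_mem_nhds (by linarith) (by linarith))
      (Icc_mem_nhds (by linarith) (by linarith))
  have hft_tend : Filter.Tendsto (fun s => ft (c s) s) (nhds s₀) (nhds (ft (t - s₀) s₀)) :=
    hca.tendsto.comp (hctend.prodMk_nhds Filter.tendsto_id)
  have hts₀ : t - s₀ ∈ Icc (0:ℝ) 1 := ⟨by linarith, by linarith⟩
  have hs₀I : s₀ ∈ Icc (0:ℝ) 1 := ⟨hs₀0.le, by linarith⟩
  have hslope2 : Filter.Tendsto (slope (fun y => f (t - s₀) y) s₀) (nhdsWithin s₀ {s₀}ᶜ)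
      (nhds (fx (t - s₀) s₀)) :=
    hasDerivAt_iff_tendsto_slope.mp (hfx (t - s₀) hts₀ s₀ hs₀I)
  rw [hasDerivAt_iff_tendsto_slope]
  have hev : ∀ᶠ s in nhdsWithin s₀ {s₀}ᶜ,
      slope (fun s => f (t - s) s) s₀ s
        = -ft (c s) s + slope (fun y => f (t - s₀) y) s₀ s := by
    filter_upwards [nhdsWithin_le_nhds ((isOpen_Ioo).mem_nhds (⟨hs₀0, hs₀t⟩ : s₀ ∈ Ioo 0 t)),
      self_mem_nhdsWithin] with s hs hne
    have hne' : s ≠ s₀ := hne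
    obtain ⟨_, heq⟩ := hc2 s hs hne'
    have hsne : s - s₀ ≠ 0 := sub_ne_zero.mpr hne'
    have heq2 : f (t - s) s = f (t - s₀) s + ft (c s) s * (s₀ - s) := by linarith
    simp only [slope_def_field]
    rw [heq2]
    field_simp
    ring
  exact Filter.Tendsto.congr'
    (Filter.EventuallyEq.symm hev)
    (((hft_tend.neg).mono_left nhdsWithin_le_nhds).add hslope2)

/-- For a twice continuously differentiable solution of the wave
equation on the closed unit square with initial data `v(0,·) = v₀`, `∂_t v(0,·) = v₁`
(`v₀` continuously differentiable with derivative `v₀'`), the interface equation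
`∂_t v(t,0) + ∂_x v(t,0) = v₀'(t) + v₁(t)` holds for every `t ∈ [0,1]`. -/
theorem interface_equation (v vt vx vtt vtx vxx : ℝ → ℝ → ℝ) (v₀ v₀' v₁ : ℝ → ℝ)
    (hv : IsWaveSol 1 v vt vx vtt vtx vxx)
    (hv₀ : ∀ x ∈ Icc (0:ℝ) 1, v 0 x = v₀ x)
    (hv₁ : ∀ x ∈ Icc (0:ℝ) 1, vt 0 x = v₁ x)
    (hv₀d : ∀ x ∈ Icc (0:ℝ) 1, HasDerivAt v₀ (v₀' x) x)
    (hv₀c : ContinuousOn v₀' (Icc 0 1)) :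
    ∀ t ∈ Icc (0:ℝ) 1, vt t 0 + vx t 0 = v₀' t + v₁ t := by
  have h0I : (0:ℝ) ∈ Icc (0:ℝ) 1 := ⟨le_refl 0, zero_le_one⟩
  -- `vx 0 x = v₀' x` on `[0,1]` by uniqueness of derivatives within `[0,1]`
  have hux : ∀ x ∈ Icc (0:ℝ) 1, vx 0 x = v₀' x := by
    intro x hx
    have hu : UniqueDiffWithinAt ℝ (Icc (0:ℝ) 1) x := (uniqueDiffOn_Icc one_pos) x hx
    have h1 : HasDerivWithinAt v₀ (vx 0 x) (Icc 0 1) x :=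
      ((hv.hvx 0 h0I x hx).hasDerivWithinAt).congr (fun y hy => (hv₀ y hy).symm) (hv₀ x hx).symm
    have h2 : HasDerivWithinAt v₀ (v₀' x) (Icc 0 1) x := (hv₀d x hx).hasDerivWithinAt
    rw [← h1.derivWithin hu, ← h2.derivWithin hu]
  intro t ht
  rcases eq_or_lt_of_le ht.1 with h0 | h0
  · rw [← h0, ← hux 0 h0I, ← hv₁ 0 h0I]; ring
  · -- 0 < t : transport along the characteristic
    set G : ℝ → ℝ := fun s => vt (t - s) s + vx (t - s) s with hG
    have hderiv : ∀ s ∈ Ioo (0:ℝ) t, HasDerivAt G 0 s := by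
      intro s hs
      have hmem1 : t - s ∈ Icc (0:ℝ) 1 := ⟨by linarith [hs.2], by linarith [hs.1, ht.2]⟩
      have hmem2 : s ∈ Icc (0:ℝ) 1 := ⟨hs.1.le, by linarith [hs.2, ht.2]⟩
      have hd1 := hasDerivAt_line vt vtt vtx ⟨h0, ht.2⟩ hs hv.hvtt hv.hvtx hv.contvtt
      have hd2 := hasDerivAt_line vx vtx vxx ⟨h0, ht.2⟩ hs hv.hvxt hv.hvxx hv.contvtx
      have := hd1.add hd2
      refine this.congr_deriv ?_
      rw [hv.wave (t - s) hmem1 s hmem2]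
      ring
    have hcontG : ContinuousOn G (Icc 0 t) := by
      have hmap : MapsTo (fun s => (t - s, s)) (Icc 0 t) (Icc (0:ℝ) 1 ×ˢ Icc (0:ℝ) 1) := by
        intro s hs
        refine ⟨⟨by simp; linarith [hs.2], by simp; linarith [hs.1, ht.2]⟩,
          ⟨hs.1, le_trans hs.2 ht.2⟩⟩
      have hline : ContinuousOn (fun s : ℝ => (t - s, s)) (Icc 0 t) :=
        (Continuous.prodMk (continuous_const.sub continuous_id) continuous_id).continuousOn
      exact (hv.contvt.comp hline hmap).add (hv.contvx.comp hline hmap)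
    have hint : interior (Icc (0:ℝ) t) = Ioo 0 t := interior_Icc
    have hdiff : DifferentiableOn ℝ G (interior (Icc (0:ℝ) t)) := by
      rw [hint]; exact fun s hs => (hderiv s hs).differentiableAt.differentiableWithinAt
    have hzero : ∀ s ∈ interior (Icc (0:ℝ) t), deriv G s = 0 := by
      rw [hint]; exact fun s hs => (hderiv s hs).deriv
    have hGconst : G 0 = G t := by
      have h0m : (0:ℝ) ∈ Icc (0:ℝ) t := ⟨le_refl 0, h0.le⟩
      have htm : t ∈ Icc (0:ℝ) t := ⟨h0.le, le_refl t⟩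
      have hle : G 0 ≤ G t := monotoneOn_of_deriv_nonneg (convex_Icc 0 t) hcontG hdiff
        (fun s hs => (hzero s hs).ge) h0m htm h0.le
      have hge : G t ≤ G 0 := antitoneOn_of_deriv_nonpos (convex_Icc 0 t) hcontG hdiff
        (fun s hs => (hzero s hs).le) h0m htm h0.le
      linarith
    have hG0 : G 0 = vt t 0 + vx t 0 := by simp [hG]
    have hGt : G t = vt 0 t + vx 0 t := by simp [hG]
    rw [← hG0, hGconst, hGt, hux t ht, hv₁ t ht]
    ring
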